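/- Let Z and V be real random variables on a probability space, with Z^+ and V^- integrable, and α > 0. Define h(x) = E[1(Z > x) e^{-α(V - x)^+}]. Then ∫_{-∞}^{∞} h(x) dx = E[(Z - V)^+ + e^{-α(V - Z)^+}/α]. -/

import Mathlib

open MeasureTheory ProbabilityTheory Real Filter Set
open scoped Topology

lemma exp_neg_mul_integral_Ioi {a : ℝ} (ha : 0 < a) (d : ℝ) :
    ∫ x in Ioi d, Real.exp (-a * x) = Real.exp (-a * d) / a := by
  have h : ∀ x ∈ Ici d, HasDerivAt (fun x => -Real.exp (-a * x) / a) (Real.exp (-a * x)) x := by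
    intro x _
    have h1 : HasDerivAt (fun x : ℝ => -a * x) (-a) x := by
      simpa using (hasDerivAt_id x).const_mul (-a)
    have h2 := (h1.exp.neg.div_const a)
    have e : -(Real.exp (-a * x) * -a) / a = Real.exp (-a * x) := by
      rw [mul_neg, neg_neg, mul_div_assoc, div_self ha.ne', mul_one]
    rw [e] at h2
    exact h2
  have htend : Tendsto (fun x => -Real.exp (-a * x) / a) atTop (𝓝 (-0 / a)) := by
    refine Tendsto.div_const (Tendsto.neg ?_) _
    exact Real.tendsto_exp_atBot.comp (tendsto_id.const_mul_atTop_of_neg (by linarith))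
  have := integral_Ioi_of_hasDerivAt_of_tendsto' h (exp_neg_integrableOn_Ioi d ha) htend
  rw [this]
  ring

lemma exp_mul_integrableOn_Iio {a : ℝ} (ha : 0 < a) (z : ℝ) :
    IntegrableOn (fun x => Real.exp (a * x)) (Iio z) := by
  have h := exp_neg_integrableOn_Ioi (-z) ha
  have h' : Integrable ((Ioi (-z)).indicator fun x => Real.exp (-a * x)) volume :=
    (integrable_indicator_iff measurableSet_Ioi).mpr h
  have h2 := h'.comp_neg
  apply (integrable_indicator_iff measurableSet_Iio).mp
  refine h2.congr ?_
  filter_upwards with x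
  by_cases hx : x < z <;>
    simp [Set.indicator_apply, mem_Ioi, mem_Iio, hx, neg_lt_neg_iff, mul_comm]

lemma exp_mul_integral_Iio {a : ℝ} (ha : 0 < a) (z : ℝ) :
    ∫ x in Iio z, Real.exp (a * x) = Real.exp (a * z) / a := by
  have h := integral_comp_neg_Ioi (c := -z) (f := fun x => Real.exp (a * x))
  rw [neg_neg] at h
  rw [setIntegral_congr_set Iio_ae_eq_Iic, ← h]
  have e : ∀ x : ℝ, Real.exp (a * -x) = Real.exp (-a * x) := fun x => by ring_nf
  simp_rw [e]
  rw [exp_neg_mul_integral_Ioi ha, show -a * -z = a * z by ring]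

lemma key_integrableOn {a : ℝ} (ha : 0 < a) (z v : ℝ) :
    IntegrableOn (fun x => Real.exp (-a * max (v - x) 0)) (Iio z) := by
  refine Integrable.mono' ((exp_mul_integrableOn_Iio ha z).const_mul (Real.exp (-a * v)))
    ?_ ?_
  · exact (Real.continuous_exp.comp (by fun_prop)).aestronglyMeasurable
  · filter_upwards with x
    rw [Real.norm_eq_abs, abs_of_pos (Real.exp_pos _), ← Real.exp_add]
    apply Real.exp_le_exp.mpr
    have : v - x ≤ max (v - x) 0 := le_max_left _ _
    nlinarith

lemma key_integral {a : ℝ} (ha : 0 < a) (z v : ℝ) :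
    ∫ x in Iio z, Real.exp (-a * max (v - x) 0)
      = max (z - v) 0 + Real.exp (-a * max (v - z) 0) / a := by
  rcases le_or_gt v z with hvz | hvz
  · have hsplit : Iio v ∪ Ico v z = Iio z := Iio_union_Ico_eq_Iio hvz
    have hdisj : Disjoint (Iio v) (Ico v z) := by
      simp only [Set.disjoint_left, mem_Iio, mem_Ico]
      intro x h1 h2
      linarith [h2.1]
    rw [← hsplit, setIntegral_union hdisj measurableSet_Ico
      ((key_integrableOn ha z v).mono_set (Iio_subset_Iio hvz))
      ((key_integrableOn ha z v).mono_set (fun x hx => hx.2))]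
    have e1 : ∫ x in Iio v, Real.exp (-a * max (v - x) 0) = 1 / a := by
      rw [setIntegral_congr_fun measurableSet_Iio
        (g := fun x => Real.exp (-a * v) * Real.exp (a * x))]
      · rw [integral_const_mul, exp_mul_integral_Iio ha, ← mul_div_assoc, ← Real.exp_add]
        simp
      · intro x hx
        simp only [mem_Iio] at hx
        dsimp only
        rw [max_eq_left (by linarith), ← Real.exp_add]
        ring_nf
    have e2 : ∫ x in Ico v z, Real.exp (-a * max (v - x) 0) = z - v := by
      rw [setIntegral_congr_fun measurableSet_Ico (g := fun _ => (1 : ℝ))]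
      · simp [Real.volume_Ico, ENNReal.toReal_ofReal (by linarith : (0:ℝ) ≤ z - v), hvz]
      · intro x hx
        simp only [mem_Ico] at hx
        dsimp only
        rw [max_eq_right (by linarith [hx.1]), mul_zero, Real.exp_zero]
    rw [e1, e2, max_eq_left (by linarith : (0:ℝ) ≤ z - v),
      max_eq_right (by linarith : v - z ≤ 0), mul_zero, Real.exp_zero]
    ring
  · rw [setIntegral_congr_fun measurableSet_Iio
      (g := fun x => Real.exp (-a * v) * Real.exp (a * x))]
    · rw [integral_const_mul, exp_mul_integral_Iio ha, ← mul_div_assoc, ← Real.exp_add,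
        max_eq_right (by linarith : z - v ≤ 0), max_eq_left (by linarith : (0:ℝ) ≤ v - z)]
      ring_nf
    · intro x hx
      simp only [mem_Iio] at hx
      dsimp only
      rw [max_eq_left (by linarith), ← Real.exp_add]
      ring_nf

theorem stmt3 {Ω : Type*} [MeasurableSpace Ω] (μ : Measure Ω) [IsProbabilityMeasure μ]
    (Z V : Ω → ℝ) (hZ : Measurable Z) (hV : Measurable V) (α : ℝ) (hα : 0 < α)
    (hZp : Integrable (fun ω => max (Z ω) 0) μ)
    (hVm : Integrable (fun ω => max (-V ω) 0) μ) :
    ∫ x : ℝ, ∫ ω, Set.indicator {ω | x < Z ω}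
        (fun ω => Real.exp (-α * max (V ω - x) 0)) ω ∂μ
      = ∫ ω, (max (Z ω - V ω) 0 + Real.exp (-α * max (V ω - Z ω) 0) / α) ∂μ := by
  set f : ℝ → Ω → ℝ := fun x ω =>
    Set.indicator {ω | x < Z ω} (fun ω => Real.exp (-α * max (V ω - x) 0)) ω with hf
  have hfeq : ∀ x ω, f x ω =
      Set.indicator (Iio (Z ω)) (fun x => Real.exp (-α * max (V ω - x) 0)) x := by
    intro x ω
    by_cases hx : x < Z ω <;> simp [hf, Set.indicator_apply, hx]
  have hmeas : AEStronglyMeasurable (Function.uncurry f) (volume.prod μ) := by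
    have he : Function.uncurry f = Set.indicator {p : ℝ × Ω | p.1 < Z p.2}
        (fun p => Real.exp (-α * max (V p.2 - p.1) 0)) := by
      funext p
      by_cases hp : p.1 < Z p.2 <;>
        simp [Function.uncurry, hf, Set.indicator_apply, hp]
    rw [he]
    refine (Measurable.indicator ?_ ?_).aestronglyMeasurable
    · fun_prop
    · have : {p : ℝ × Ω | p.1 < Z p.2} = {p : ℝ × Ω | 0 < Z p.2 - p.1} := by
        ext p; simp [sub_pos]
      rw [this]
      exact measurableSet_lt measurable_const (by fun_prop)
  have hinner : ∀ ω, ∫ x : ℝ, f x ω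
      = max (Z ω - V ω) 0 + Real.exp (-α * max (V ω - Z ω) 0) / α := by
    intro ω
    simp_rw [hfeq]
    rw [integral_indicator measurableSet_Iio]
    exact key_integral hα (Z ω) (V ω)
  have hinnerInt : ∀ ω, Integrable (fun x => f x ω) volume := by
    intro ω
    have h := (key_integrableOn hα (Z ω) (V ω))
    have h' := (integrable_indicator_iff measurableSet_Iio).mpr h
    refine h'.congr ?_
    filter_upwards with x
    rw [← hfeq]
  have hnorm : ∀ ω, (∫ x : ℝ, ‖f x ω‖) = ∫ x : ℝ, f x ω := by
    intro ω
    congr 1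
    funext x
    rw [Real.norm_eq_abs, abs_of_nonneg]
    exact Set.indicator_nonneg (fun _ _ => (Real.exp_pos _).le) _
  have hgInt : Integrable
      (fun ω => max (Z ω - V ω) 0 + Real.exp (-α * max (V ω - Z ω) 0) / α) μ := by
    refine Integrable.mono' ((hZp.add hVm).add (integrable_const (1 / α))) ?_ ?_
    · apply Measurable.aestronglyMeasurable
      fun_prop
    · filter_upwards with ω
      have h1 : max (Z ω - V ω) 0 ≤ max (Z ω) 0 + max (-V ω) 0 := by
        apply max_le _ (by positivity)
        have := le_max_left (Z ω) 0
        have := le_max_left (-V ω) 0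
        linarith
      have h2 : Real.exp (-α * max (V ω - Z ω) 0) / α ≤ 1 / α := by
        gcongr
        exact Real.exp_le_one_iff.mpr (by nlinarith [le_max_right (V ω - Z ω) (0:ℝ)])
      rw [Real.norm_eq_abs, abs_of_nonneg (by positivity)]
      simp only [Pi.add_apply]
      linarith
  have hInt : Integrable (Function.uncurry f) (volume.prod μ) := by
    rw [integrable_prod_iff' hmeas]
    constructor
    · filter_upwards with ω
      exact hinnerInt ω
    · refine hgInt.congr ?_
      filter_upwards with ω
      rw [← hinner ω, ← hnorm ω]
      rfl
  calc ∫ x : ℝ, ∫ ω, f x ω ∂μ = ∫ ω, (∫ x : ℝ, f x ω) ∂μ := integral_integral_swap hInt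
    _ = ∫ ω, (max (Z ω - V ω) 0 + Real.exp (-α * max (V ω - Z ω) 0) / α) ∂μ := by
        congr 1; funext ω; exact hinner ω
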